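/- There is a universal constant C > 0 with the following property. For every μ ∈ ℝ, σ > 0, a ∈ (0, 1), and measurable S ⊆ ℝ with survival probability N(μ,σ²)(S) ≥ a, the random variable z distributed as the truncated Gaussian N(μ,σ²,S) satisfies Var(z²) ≤ C·( μ²σ²·(1 + log(1/a)) + σ⁴·(1 + log(1/a))² ). -/

import Mathlib

open MeasureTheory ProbabilityTheory Real
open scoped NNReal ENNReal
section Aux

lemma aux_le_exp {u : ℝ} (hu : 0 ≤ u) : u ≤ 16 * rexp (u / 8) := by
  have h := Real.add_one_le_exp (u / 16)
  have h2 : rexp (u / 16) ≤ rexp (u / 8) := Real.exp_le_exp.2 (by linarith)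
  nlinarith [Real.exp_pos (u/16)]

lemma aux_sq_le_exp {u : ℝ} (hu : 0 ≤ u) : u ^ 2 ≤ 256 * rexp (u / 8) := by
  have h := Real.add_one_le_exp (u / 16)
  have h2 : rexp (u / 16) ^ 2 = rexp (u / 8) := by
    rw [← Real.exp_nat_mul]; norm_num; ring_nf
  nlinarith [Real.exp_pos (u/16)]

lemma aux1 {u t : ℝ} (hu : 0 ≤ u) (ht : 0 ≤ t) :
    u ≤ t + 16 * rexp (-t / 4) * rexp (3 * u / 8) := by
  rcases le_or_gt u t with h | h
  · have : 0 ≤ 16 * rexp (-t / 4) * rexp (3 * u / 8) := by positivity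
    linarith
  · have h1 : u ≤ 16 * rexp (u / 8) := aux_le_exp hu
    have h2 : 1 ≤ rexp ((u - t) / 4) := Real.one_le_exp (by linarith)
    have h3 : rexp (u / 8) * rexp ((u - t) / 4) = rexp (-t / 4) * rexp (3 * u / 8) := by
      rw [← Real.exp_add, ← Real.exp_add]; ring_nf
    nlinarith [Real.exp_pos (u/8), Real.exp_pos ((u-t)/4)]

lemma aux2 {u t : ℝ} (hu : 0 ≤ u) (ht : 0 ≤ t) :
    u ^ 2 ≤ t ^ 2 + 256 * rexp (-t / 4) * rexp (3 * u / 8) := by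
  rcases le_or_gt u t with h | h
  · have : 0 ≤ 256 * rexp (-t / 4) * rexp (3 * u / 8) := by positivity
    nlinarith
  · have h1 : u ^ 2 ≤ 256 * rexp (u / 8) := aux_sq_le_exp hu
    have h2 : 1 ≤ rexp ((u - t) / 4) := Real.one_le_exp (by linarith)
    have h3 : rexp (u / 8) * rexp ((u - t) / 4) = rexp (-t / 4) * rexp (3 * u / 8) := by
      rw [← Real.exp_add, ← Real.exp_add]; ring_nf
    nlinarith [Real.exp_pos (u/8), Real.exp_pos ((u-t)/4)]

lemma variance_shift {Ω : Type*} [MeasurableSpace Ω] {ν : Measure Ω} [IsProbabilityMeasure ν]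
    {X : Ω → ℝ} (hX : MemLp X 2 ν) (c : ℝ) :
    variance X ν = variance (fun ω => X ω - c) ν := by
  have hXc : MemLp (fun ω => X ω - c) 2 ν := hX.sub (memLp_const c)
  rw [variance_eq_sub hX, variance_eq_sub hXc]
  have hXi : Integrable X ν := hX.integrable one_le_two
  have hX2 : Integrable (fun ω => X ω ^ 2) ν := hX.integrable_sq
  have e1 : ∫ ω, ((fun ω => X ω - c) ^ 2) ω ∂ν
      = ∫ ω, (X ω ^ 2 - 2 * c * X ω + c ^ 2) ∂ν := by
    congr 1; ext ω; simp [Pi.pow_apply]; ring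
  have e2 : ∫ ω, (X ω ^ 2 - 2 * c * X ω + c ^ 2) ∂ν
      = ∫ ω, X ω ^ 2 ∂ν - 2 * c * ∫ ω, X ω ∂ν + c ^ 2 := by
    have hcm : Integrable (fun ω => 2 * c * X ω) ν := hXi.const_mul (2*c)
    have hsub : Integrable (fun ω => X ω ^ 2 - 2 * c * X ω) ν := hX2.sub hcm
    rw [integral_add hsub (integrable_const _), integral_sub hX2 hcm,
      integral_const_mul, integral_const]
    simp
  have e3 : ∫ ω, (X ω - c) ∂ν = ∫ ω, X ω ∂ν - c := by
    rw [integral_sub hXi (integrable_const c), integral_const]; simp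
  rw [e1, e2, e3]
  have e4 : ∫ x, (X ^ 2) x ∂ν = ∫ ω, X ω ^ 2 ∂ν := by simp [Pi.pow_apply]
  rw [e4]; ring

lemma key_density (μ σ : ℝ) (hσ : 0 < σ) (x : ℝ) :
    gaussianPDFReal μ ⟨σ^2, sq_nonneg σ⟩ x * rexp (3*(x-μ)^2/(8*σ^2))
      = (√(2*π*σ^2))⁻¹ * rexp (-(8*σ^2)⁻¹ * (x-μ)^2) := by
  simp only [gaussianPDFReal]; erw [NNReal.coe_mk]
  rw [mul_assoc, ← Real.exp_add]
  congr 2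
  field_simp
  ring

lemma int_density (μ σ : ℝ) (hσ : 0 < σ) :
    Integrable (fun x => (√(2*π*σ^2))⁻¹ * rexp (-(8*σ^2)⁻¹ * (x-μ)^2)) volume :=
  (((integrable_exp_neg_mul_sq (b := (8*σ^2)⁻¹) (by positivity)).comp_sub_right μ)).const_mul _

lemma val_density (μ σ : ℝ) (hσ : 0 < σ) :
    ∫ x, (√(2*π*σ^2))⁻¹ * rexp (-(8*σ^2)⁻¹ * (x-μ)^2) = 2 := by
  rw [integral_const_mul]
  have : ∫ x, rexp (-(8*σ^2)⁻¹ * (x-μ)^2)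
      = ∫ x, rexp (-(8*σ^2)⁻¹ * x^2) :=
    integral_sub_right_eq_self (fun x => rexp (-(8*σ^2)⁻¹ * x^2)) μ
  rw [this, integral_gaussian]
  have h1 : π / (8*σ^2)⁻¹ = 4 * (2*π*σ^2) := by field_simp; ring
  have h3 : √(4 * (2*π*σ^2)) = 2 * √(2*π*σ^2) := by
    rw [show (4:ℝ) = 2^2 by norm_num,
      Real.sqrt_mul (by positivity : (0:ℝ) ≤ 2^2) (2*π*σ^2), Real.sqrt_sq (by norm_num : (0:ℝ) ≤ 2)]
  rw [h1, h3]
  have h2 : (0:ℝ) < √(2*π*σ^2) := Real.sqrt_pos.2 (by positivity)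
  field_simp

lemma hv_ne (σ : ℝ) (hσ : 0 < σ) : (⟨σ^2, sq_nonneg σ⟩ : ℝ≥0) ≠ 0 := by
  intro h
  have := congrArg NNReal.toReal h
  erw [NNReal.coe_mk, NNReal.coe_zero] at this
  exact pow_ne_zero 2 hσ.ne' this

lemma integrable_g_gauss (μ σ : ℝ) (hσ : 0 < σ) :
    Integrable (fun x => rexp (3*(x-μ)^2/(8*σ^2))) (gaussianReal μ ⟨σ^2, sq_nonneg σ⟩) := by
  rw [gaussianReal_of_var_ne_zero _ (hv_ne σ hσ)]; erw [gaussianPDF_def]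
  erw [integrable_withDensity_iff (measurable_gaussianPDFReal μ _).ennreal_ofReal
    (ae_of_all _ fun x => ENNReal.ofReal_lt_top)]
  refine (int_density μ σ hσ).congr (ae_of_all _ fun x => ?_)
  simp only
  erw [ENNReal.toReal_ofReal (gaussianPDFReal_nonneg μ _ x)]
  have h := key_density μ σ hσ x
  linarith [h]

lemma integral_g_gauss (μ σ : ℝ) (hσ : 0 < σ) :
    ∫ x, rexp (3*(x-μ)^2/(8*σ^2)) ∂(gaussianReal μ ⟨σ^2, sq_nonneg σ⟩) = 2 := by
  rw [gaussianReal_of_var_ne_zero _ (hv_ne σ hσ)]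
  have hd : gaussianPDF μ ⟨σ^2, sq_nonneg σ⟩
      = fun x => ((gaussianPDFReal μ ⟨σ^2, sq_nonneg σ⟩ x).toNNReal : ℝ≥0∞) := rfl
  rw [hd]; erw [integral_withDensity_eq_integral_smul
    (measurable_gaussianPDFReal μ _).real_toNNReal]
  have e : ∀ x : ℝ, (gaussianPDFReal μ ⟨σ^2, sq_nonneg σ⟩ x).toNNReal • rexp (3*(x-μ)^2/(8*σ^2))
      = (√(2*π*σ^2))⁻¹ * rexp (-(8*σ^2)⁻¹ * (x-μ)^2) := fun x => by
    erw [NNReal.smul_def, smul_eq_mul, Real.coe_toNNReal _ (gaussianPDFReal_nonneg μ _ x),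
      key_density μ σ hσ x]
  rw [integral_congr_ae (ae_of_all _ e), val_density μ σ hσ]
end Aux

/-- There is a universal constant `C > 0` such that for all `μ ∈ ℝ`,
`σ > 0`, `a ∈ (0,1)` and measurable `S ⊆ ℝ` with `N(μ,σ²)(S) ≥ a`, the truncated Gaussian
`z ~ N(μ,σ²,S)` satisfies
`Var(z²) ≤ C·(μ²σ²(1 + log(1/a)) + σ⁴(1 + log(1/a))²)`. -/
theorem stmt_14 :
    ∃ C : ℝ, 0 < C ∧ ∀ (μ σ a : ℝ), 0 < σ → 0 < a → a < 1 →
      ∀ S : Set ℝ, MeasurableSet S →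
        a ≤ (gaussianReal μ ⟨σ ^ 2, sq_nonneg σ⟩ S).toReal →
        variance (fun z => z ^ 2)
            (ProbabilityTheory.cond (gaussianReal μ ⟨σ ^ 2, sq_nonneg σ⟩) S)
          ≤ C * (μ ^ 2 * σ ^ 2 * (1 + Real.log (1 / a))
              + σ ^ 4 * (1 + Real.log (1 / a)) ^ 2) := by
  refine ⟨1024, by norm_num, ?_⟩
  intro μ σ a hσ ha0 ha1 S hS haS
  set P : Measure ℝ := gaussianReal μ ⟨σ ^ 2, sq_nonneg σ⟩ with hP
  set ν : Measure ℝ := ProbabilityTheory.cond P S with hν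
  set g : ℝ → ℝ := fun x => rexp (3*(x-μ)^2/(8*σ^2)) with hg
  set q : ℝ → ℝ := fun x => (x-μ)^2/σ^2 with hq
  set L : ℝ := Real.log (1/a) with hL
  have hL0 : 0 < L := by
    rw [hL, one_div, Real.log_inv]
    linarith [Real.log_neg ha0 ha1]
  have hPS0 : P S ≠ 0 := by
    intro h
    rw [h] at haS
    simp only [ENNReal.toReal_zero] at haS
    linarith
  haveI : IsProbabilityMeasure P :=
    (fun v : ℝ≥0 => (inferInstance : IsProbabilityMeasure (gaussianReal μ v))) ⟨σ ^ 2, sq_nonneg σ⟩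
  haveI : IsProbabilityMeasure ν := cond_isProbabilityMeasure hPS0
  -- transfer of integrability
  have transfer : ∀ {f : ℝ → ℝ}, Integrable f P → Integrable f ν := by
    intro f hf
    rw [hν]
    exact (hf.restrict).smul_measure (ENNReal.inv_ne_top.2 hPS0)
  have hgP : Integrable g P := integrable_g_gauss μ σ hσ
  have hgν : Integrable g ν := transfer hgP
  -- q basics
  have hq0 : ∀ x, 0 ≤ q x := fun x => by rw [hq]; positivity
  have hgq : ∀ x, g x = rexp (3 * q x / 8) := fun x => by rw [hg, hq]; ring_nf
  have hg1 : ∀ x, (1:ℝ) ≤ g x := fun x => by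
    rw [hgq x]; exact Real.one_le_exp (by positivity)
  have hqmeas : AEStronglyMeasurable q P :=
    (((measurable_id.sub_const μ).pow_const 2).div_const _).aestronglyMeasurable
  -- integrability under P
  have Iq : Integrable q P := by
    refine Integrable.mono' (hgP.const_mul 16) hqmeas (ae_of_all _ fun x => ?_)
    rw [Real.norm_of_nonneg (hq0 x)]
    have := aux1 (hq0 x) (le_refl (0:ℝ))
    simpa [hgq x] using this
  have Iq2 : Integrable (fun x => q x ^ 2) P := by
    refine Integrable.mono' (hgP.const_mul 256) (hqmeas.pow 2) (ae_of_all _ fun x => ?_)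
    rw [Real.norm_of_nonneg (sq_nonneg _)]
    have := aux2 (hq0 x) (le_refl (0:ℝ))
    simpa [hgq x] using this
  have h_poly : ∀ x : ℝ, (x^2 - μ^2)^2 ≤ 8*μ^2*σ^2 * q x + 2*σ^4 * q x ^ 2 := by
    intro x
    have hσq : σ^2 * q x = (x-μ)^2 := by rw [hq]; field_simp
    nlinarith [sq_nonneg ((x-μ) - 2*μ), sq_nonneg (x-μ), sq_nonneg σ, sq_nonneg ((x-μ)^2)]
  have Ipoly : Integrable (fun x => (x^2 - μ^2)^2) P := by
    refine Integrable.mono' ((Iq.const_mul (8*μ^2*σ^2)).add (Iq2.const_mul (2*σ^4)))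
      ((((measurable_id.pow_const 2).sub_const (μ^2)).pow_const 2).aestronglyMeasurable)
      (ae_of_all _ fun x => ?_)
    rw [Real.norm_of_nonneg (sq_nonneg _)]
    exact h_poly x
  have Iz4 : Integrable (fun x : ℝ => (x^2)^2) P := by
    refine Integrable.mono' (hgP.const_mul (2048*σ^4 + 8*μ^4))
      (((measurable_id.pow_const 2).pow_const 2).aestronglyMeasurable)
      (ae_of_all _ fun x => ?_)
    rw [Real.norm_of_nonneg (sq_nonneg _)]
    have h1 : (x^2)^2 ≤ 8*(x-μ)^4 + 8*μ^4 := by nlinarith [sq_nonneg ((x-μ)^2 - μ^2), sq_nonneg (x*μ - μ^2), sq_nonneg ((x-μ)*μ)]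
    have h2 : (x-μ)^4 = σ^4 * q x ^ 2 := by rw [hq]; field_simp
    have h3 : q x ^ 2 ≤ 256 * g x := by
      have := aux2 (hq0 x) (le_refl (0:ℝ))
      simpa [hgq x] using this
    have h4 : (1:ℝ) ≤ g x := hg1 x
    have hσ4 : (0:ℝ) ≤ σ^4 := by positivity
    have h5 : σ^4 * q x ^ 2 ≤ σ^4 * (256 * g x) := mul_le_mul_of_nonneg_left h3 hσ4
    have h6 : (0:ℝ) ≤ μ^4 * (g x - 1) :=
      mul_nonneg (by positivity) (sub_nonneg.2 h4)
    nlinarith [h5, h6]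
  -- integral of g under ν
  have hgν_int : ∫ x, g x ∂ν ≤ 2 * a⁻¹ := by
    have e1 : ∫ x, g x ∂ν = (P S)⁻¹.toReal * ∫ x in S, g x ∂P := by
      rw [hν, ProbabilityTheory.cond, integral_smul_measure, smul_eq_mul]
    have h1 : ∫ x in S, g x ∂P ≤ 2 := by
      rw [← integral_g_gauss μ σ hσ]
      exact setIntegral_le_integral hgP (ae_of_all _ fun x => (Real.exp_pos _).le)
    have h2 : (P S)⁻¹.toReal ≤ a⁻¹ := by
      rw [ENNReal.toReal_inv]
      exact inv_anti₀ ha0 haS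
    have h3 : (0:ℝ) ≤ ∫ x in S, g x ∂P :=
      integral_nonneg fun x => (Real.exp_pos _).le
    rw [e1]
    calc (P S)⁻¹.toReal * ∫ x in S, g x ∂P ≤ a⁻¹ * 2 :=
          mul_le_mul h2 h1 h3 (by positivity)
      _ = 2 * a⁻¹ := by ring
  have hexpL : rexp (-L) = a := by
    rw [hL, one_div, Real.log_inv, neg_neg]
    exact Real.exp_log ha0
  -- moment bounds under ν
  have hM1 : ∫ x, q x ∂ν ≤ 4*L + 32 := by
    have hpt : ∀ x, q x ≤ (4*L) + (16 * rexp (-L)) * g x := by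
      intro x
      have := aux1 (hq0 x) (by positivity : (0:ℝ) ≤ 4*L)
      have e : -(4*L)/4 = -L := by ring
      rw [e] at this
      calc q x ≤ 4*L + 16 * rexp (-L) * rexp (3 * q x / 8) := this
        _ = (4*L) + (16 * rexp (-L)) * g x := by rw [hgq x]
    calc ∫ x, q x ∂ν ≤ ∫ x, ((4*L) + (16 * rexp (-L)) * g x) ∂ν := by
          refine integral_mono (transfer Iq) ?_ hpt
          exact (integrable_const _).add (hgν.const_mul _)
      _ = 4*L + (16 * rexp (-L)) * ∫ x, g x ∂ν := by
          rw [integral_add (integrable_const _) (hgν.const_mul _), integral_const,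
            integral_const_mul]
          simp
      _ ≤ 4*L + (16 * a) * (2 * a⁻¹) := by
          rw [hexpL]
          have : (16 * a) * ∫ x, g x ∂ν ≤ (16 * a) * (2 * a⁻¹) :=
            mul_le_mul_of_nonneg_left hgν_int (by positivity)
          linarith
      _ = 4*L + 32 := by field_simp; ring
  have hM2 : ∫ x, q x ^ 2 ∂ν ≤ 16*L^2 + 512 := by
    have hpt : ∀ x, q x ^ 2 ≤ ((4*L)^2) + (256 * rexp (-L)) * g x := by
      intro x
      have := aux2 (hq0 x) (by positivity : (0:ℝ) ≤ 4*L)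
      have e : -(4*L)/4 = -L := by ring
      rw [e] at this
      calc q x ^ 2 ≤ (4*L)^2 + 256 * rexp (-L) * rexp (3 * q x / 8) := this
        _ = ((4*L)^2) + (256 * rexp (-L)) * g x := by rw [hgq x]
    calc ∫ x, q x ^ 2 ∂ν ≤ ∫ x, (((4*L)^2) + (256 * rexp (-L)) * g x) ∂ν := by
          refine integral_mono (transfer Iq2) ?_ hpt
          exact (integrable_const _).add (hgν.const_mul _)
      _ = (4*L)^2 + (256 * rexp (-L)) * ∫ x, g x ∂ν := by
          rw [integral_add (integrable_const _) (hgν.const_mul _), integral_const,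
            integral_const_mul]
          simp
      _ ≤ (4*L)^2 + (256 * a) * (2 * a⁻¹) := by
          rw [hexpL]
          have : (256 * a) * ∫ x, g x ∂ν ≤ (256 * a) * (2 * a⁻¹) :=
            mul_le_mul_of_nonneg_left hgν_int (by positivity)
          linarith
      _ = 16*L^2 + 512 := by field_simp; ring
  -- Memℒp of z^2 under ν
  have hz2 : MemLp (fun z : ℝ => z ^ 2) 2 ν := by
    refine (memLp_two_iff_integrable_sq
      ((measurable_id.pow_const 2).aestronglyMeasurable)).2 ?_
    exact transfer Iz4
  -- main chain
  have step1 : variance (fun z => z ^ 2) ν = variance (fun z : ℝ => z ^ 2 - μ ^ 2) ν :=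
    variance_shift hz2 (μ^2)
  have step2 : variance (fun z : ℝ => z ^ 2 - μ ^ 2) ν ≤ ∫ z, (z^2 - μ^2)^2 ∂ν := by
    have h := variance_le_expectation_sq (μ := ν) (X := fun z : ℝ => z ^ 2 - μ ^ 2)
      (((measurable_id.pow_const 2).sub_const (μ^2)).aestronglyMeasurable)
    calc variance (fun z : ℝ => z ^ 2 - μ ^ 2) ν
        ≤ ∫ z, ((fun z : ℝ => z ^ 2 - μ ^ 2) ^ 2) z ∂ν := h
      _ = ∫ z, (z^2 - μ^2)^2 ∂ν := by
          apply integral_congr_ae (ae_of_all _ fun x => ?_)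
          simp [Pi.pow_apply]
  have step3 : ∫ z, (z^2 - μ^2)^2 ∂ν
      ≤ 8*μ^2*σ^2 * (∫ x, q x ∂ν) + 2*σ^4 * (∫ x, q x ^ 2 ∂ν) := by
    calc ∫ z, (z^2 - μ^2)^2 ∂ν ≤ ∫ x, (8*μ^2*σ^2 * q x + 2*σ^4 * q x ^ 2) ∂ν := by
          refine integral_mono (transfer Ipoly) ?_ h_poly
          exact ((transfer Iq).const_mul _).add ((transfer Iq2).const_mul _)
      _ = 8*μ^2*σ^2 * (∫ x, q x ∂ν) + 2*σ^4 * (∫ x, q x ^ 2 ∂ν) := by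
          rw [integral_add ((transfer Iq).const_mul _) ((transfer Iq2).const_mul _),
            integral_const_mul, integral_const_mul]
  have hμσ2 : (0:ℝ) ≤ μ^2*σ^2 := by positivity
  have hσ4 : (0:ℝ) ≤ σ^4 := by positivity
  have final : 8*μ^2*σ^2 * (∫ x, q x ∂ν) + 2*σ^4 * (∫ x, q x ^ 2 ∂ν)
      ≤ 1024 * (μ^2 * σ^2 * (1 + L) + σ^4 * (1 + L)^2) := by
    have h1 : 8*μ^2*σ^2 * (∫ x, q x ∂ν) ≤ 8*μ^2*σ^2 * (4*L + 32) := by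
      apply mul_le_mul_of_nonneg_left hM1 (by positivity)
    have h2 : 2*σ^4 * (∫ x, q x ^ 2 ∂ν) ≤ 2*σ^4 * (16*L^2 + 512) := by
      apply mul_le_mul_of_nonneg_left hM2 (by positivity)
    nlinarith [mul_nonneg hμσ2 hL0.le, mul_nonneg hσ4 hL0.le,
      mul_nonneg (mul_nonneg hσ4 hL0.le) hL0.le]
  calc variance (fun z => z ^ 2) ν = variance (fun z : ℝ => z ^ 2 - μ ^ 2) ν := step1
    _ ≤ ∫ z, (z^2 - μ^2)^2 ∂ν := step2
    _ ≤ 8*μ^2*σ^2 * (∫ x, q x ∂ν) + 2*σ^4 * (∫ x, q x ^ 2 ∂ν) := step3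
    _ ≤ 1024 * (μ^2 * σ^2 * (1 + L) + σ^4 * (1 + L)^2) := final
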